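/- Fix r ∈ (0,1) and q with 0 < q < 3r²/(2 + r), and let F and C be as defined. Then F(·,q) has at least three zeros on (0,∞): there exists g₀ with 0 < g₀ < (1 − √q)^{1/r} and F(g₀, q) = 0; F(1, q) = 0; and there exists g₁ with g₁ > (1 + √q)^{1/r} and F(g₁, q) = 0. -/

import Mathlib

/-- The integration constant `C(q)` (for fixed `r`). -/
noncomputable def Ccoef (r q : ℝ) : ℝ := r * (3 * r ^ 2 - q * (2 + r)) / ((1 - r) * (4 - r ^ 2))

/-- The right-hand side `F(g,q)` of the reduced first-order ODE (for fixed `r`). -/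
noncomputable def Ffun (r q g : ℝ) : ℝ :=
  (1 - q) / (1 - r) * g ^ (2 - 2 * r) - 2 * (3 - q) / (2 - r) * g ^ (2 - r)
    + 3 * g ^ (2 : ℝ) - 2 / (2 + r) * g ^ (2 + r) - Ccoef r q

open Real Filter Set

/-- Derivative of `F(·, q)` at positive `g`, in factored form, where `s = √q`. -/
lemma gmKdV_Fderiv (r q s g : ℝ) (hr0 : 0 < r) (hr1 : r < 1) (hs : s ^ 2 = q) (hg : 0 < g) :
    HasDerivAt (Ffun r q)
      (-2 * g ^ (1 - 2*r) * (g ^ r - 1) * (g ^ r - (1 - s)) * (g ^ r - (1 + s))) g := by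
  have hne := hg.ne'
  have h1 : HasDerivAt (fun x : ℝ => x ^ (2 - 2*r)) ((2 - 2*r) * g ^ (2 - 2*r - 1)) g :=
    Real.hasDerivAt_rpow_const (Or.inl hne)
  have h2 : HasDerivAt (fun x : ℝ => x ^ (2 - r)) ((2 - r) * g ^ (2 - r - 1)) g :=
    Real.hasDerivAt_rpow_const (Or.inl hne)
  have h3 : HasDerivAt (fun x : ℝ => x ^ ((2:ℝ))) ((2:ℝ) * g ^ ((2:ℝ) - 1)) g :=
    Real.hasDerivAt_rpow_const (Or.inl hne)
  have h4 : HasDerivAt (fun x : ℝ => x ^ (2 + r)) ((2 + r) * g ^ (2 + r - 1)) g :=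
    Real.hasDerivAt_rpow_const (Or.inl hne)
  have H := ((((h1.const_mul ((1 - q) / (1 - r))).sub
      (h2.const_mul (2 * (3 - q) / (2 - r)))).add (h3.const_mul 3)).sub
      (h4.const_mul (2 / (2 + r)))).sub_const (Ccoef r q)
  have hFf : Ffun r q = fun x : ℝ =>
      (1 - q) / (1 - r) * x ^ (2 - 2 * r) - 2 * (3 - q) / (2 - r) * x ^ (2 - r)
        + 3 * x ^ (2 : ℝ) - 2 / (2 + r) * x ^ (2 + r) - Ccoef r q := rfl
  rw [hFf]
  refine H.congr_deriv ?_
  symm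
  have hr1' : (1:ℝ) - r ≠ 0 := by linarith
  have hr2' : (2:ℝ) - r ≠ 0 := by linarith
  have hr3' : (2:ℝ) + r ≠ 0 := by linarith
  rw [show (2:ℝ) - 2*r - 1 = 1 - 2*r by ring, show (2:ℝ) - r - 1 = 1 - r by ring,
    show (2:ℝ) + r - 1 = 1 + r by ring, show (2:ℝ) - 1 = 1 by ring, Real.rpow_one]
  have e1 : g ^ (1 - r) = g ^ (1 - 2*r) * g ^ r := by
    rw [← Real.rpow_add hg]; ring_nf
  have e2 : g = g ^ (1 - 2*r) * g ^ r * g ^ r := by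
    rw [← Real.rpow_add hg, ← Real.rpow_add hg]
    rw [show 1 - 2*r + r + r = (1:ℝ) by ring, Real.rpow_one]
  have e3 : g ^ (1 + r) = g ^ (1 - 2*r) * g ^ r * g ^ r * g ^ r := by
    rw [← Real.rpow_add hg, ← Real.rpow_add hg, ← Real.rpow_add hg]; ring_nf
  have hc1 : (1 - q) / (1 - r) * ((2 - 2*r) * g ^ (1 - 2*r)) = 2 * (1 - q) * g ^ (1 - 2*r) := by
    field_simp
  have hc2 : 2 * (3 - q) / (2 - r) * ((2 - r) * g ^ (1 - r)) = 2 * (3 - q) * g ^ (1 - r) := by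
    field_simp
  have hc4 : 2 / (2 + r) * ((2 + r) * g ^ (1 + r)) = 2 * g ^ (1 + r) := by
    field_simp
  rw [hc1, hc2, hc4, ← hs]
  linear_combination (2 * (3 - s^2)) * e1 - 6 * e2 + 2 * e3

/-- for `0 < q < 3r²/(2+r)`, `F(·,q)` has at least three zeros on `(0,∞)`:
one `g₀ ∈ (0, (1−√q)^{1/r})`, the point `g = 1`, and one `g₁ > (1+√q)^{1/r}`. -/
theorem gmKdV_three_zeros
    (r q : ℝ) (hr : r ∈ Set.Ioo (0 : ℝ) 1)
    (hq0 : 0 < q) (hq1 : q < 3 * r ^ 2 / (2 + r)) :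
    (∃ g₀ : ℝ, 0 < g₀ ∧ g₀ < (1 - Real.sqrt q) ^ (1 / r) ∧ Ffun r q g₀ = 0)
    ∧ Ffun r q 1 = 0
    ∧ (∃ g₁ : ℝ, g₁ > (1 + Real.sqrt q) ^ (1 / r) ∧ Ffun r q g₁ = 0) := by
  obtain ⟨hr0, hr1⟩ := hr
  have hr1' : (1:ℝ) - r ≠ 0 := by linarith
  have hr2' : (2:ℝ) - r ≠ 0 := by linarith
  have hr3' : (0:ℝ) < 2 + r := by linarith
  have hq32 : q * (2 + r) < 3 * r ^ 2 := (lt_div_iff₀ hr3').mp hq1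
  have hqlt1 : q < 1 := by nlinarith
  set s : ℝ := Real.sqrt q with hs_def
  have hs2 : s ^ 2 = q := Real.sq_sqrt hq0.le
  have hs0 : 0 < s := Real.sqrt_pos.mpr hq0
  have hs1 : s < 1 := by
    nlinarith [hs2]
  have h1s : (0:ℝ) < 1 - s := by linarith
  set a : ℝ := (1 - s) ^ (1 / r) with ha_def
  set b : ℝ := (1 + s) ^ (1 / r) with hb_def
  have ha_pos : 0 < a := Real.rpow_pos_of_pos h1s _
  have ha1 : a < 1 := by
    apply Real.rpow_lt_one h1s.le (by linarith) (by positivity)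
  have hb1 : 1 < b := by
    rw [hb_def, Real.one_lt_rpow_iff_of_pos (by linarith)]
    exact Or.inl ⟨by linarith, by positivity⟩
  have hb_pos : 0 < b := by linarith
  have har : a ^ r = 1 - s := by
    rw [ha_def, ← Real.rpow_mul h1s.le, one_div_mul_cancel hr0.ne', Real.rpow_one]
  have hbr : b ^ r = 1 + s := by
    rw [hb_def, ← Real.rpow_mul (by linarith : (0:ℝ) ≤ 1 + s)]
    rw [one_div_mul_cancel hr0.ne', Real.rpow_one]
  have hC : 0 < Ccoef r q := by
    rw [Ccoef]
    exact div_pos (by nlinarith) (mul_pos (by linarith) (by nlinarith))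
  -- continuity
  have hcont : ∀ x ∈ Set.Ioi (0:ℝ), ContinuousAt (Ffun r q) x := fun x hx =>
    (gmKdV_Fderiv r q s x hr0 hr1 hs2 hx).continuousAt
  -- value at 1
  have hF1 : Ffun r q 1 = 0 := by
    rw [Ffun, Real.one_rpow, Real.one_rpow, Real.one_rpow, Real.one_rpow, Ccoef]
    have hr4' : (4:ℝ) - r^2 ≠ 0 := by nlinarith
    field_simp
    ring
  -- F is strictly decreasing on [a,1]
  have hanti : StrictAntiOn (Ffun r q) (Set.Icc a 1) := by
    apply strictAntiOn_of_deriv_neg (convex_Icc a 1)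
    · exact fun x hx => ((hcont x (lt_of_lt_of_le ha_pos hx.1)).continuousWithinAt)
    · intro x hx
      rw [interior_Icc] at hx
      have hx0 : 0 < x := lt_trans ha_pos hx.1
      rw [(gmKdV_Fderiv r q s x hr0 hr1 hs2 hx0).deriv]
      have ht1 : x ^ r < 1 := Real.rpow_lt_one hx0.le hx.2 hr0
      have ht2 : 1 - s < x ^ r := by
        rw [← har]; exact Real.rpow_lt_rpow ha_pos.le hx.1 hr0
      have hP : 0 < x ^ (1 - 2*r) := Real.rpow_pos_of_pos hx0 _
      nlinarith [mul_pos (mul_pos_of_neg_of_neg (show x ^ r - 1 < 0 by linarith)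
        (show x ^ r - (1 + s) < 0 by linarith)) (show 0 < x ^ r - (1 - s) by linarith), hP]
  -- F is strictly increasing on [1,b]
  have hmono : StrictMonoOn (Ffun r q) (Set.Icc 1 b) := by
    apply strictMonoOn_of_deriv_pos (convex_Icc 1 b)
    · exact fun x hx => ((hcont x (lt_of_lt_of_le one_pos hx.1)).continuousWithinAt)
    · intro x hx
      rw [interior_Icc] at hx
      have hx0 : 0 < x := lt_trans one_pos hx.1
      rw [(gmKdV_Fderiv r q s x hr0 hr1 hs2 hx0).deriv]
      have ht1 : 1 < x ^ r := by
        rw [Real.one_lt_rpow_iff_of_pos hx0]; exact Or.inl ⟨hx.1, hr0⟩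
      have ht2 : x ^ r < 1 + s := by
        rw [← hbr]; exact Real.rpow_lt_rpow hx0.le hx.2 hr0
      have hP : 0 < x ^ (1 - 2*r) := Real.rpow_pos_of_pos hx0 _
      nlinarith [mul_pos (mul_pos (show (0:ℝ) < x ^ r - 1 by linarith)
        (show 0 < x ^ r - (1 - s) by linarith)) hP,
        mul_pos hP (show (0:ℝ) < x ^ r - 1 by linarith)]
  have hFa : 0 < Ffun r q a := by
    have := hanti ⟨le_refl a, ha1.le⟩ ⟨ha1.le, le_refl 1⟩ ha1
    rw [hF1] at this; exact this
  have hFb : 0 < Ffun r q b := by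
    have := hmono ⟨le_refl 1, hb1.le⟩ ⟨hb1.le, le_refl b⟩ hb1
    rw [hF1] at this; exact this
  -- behaviour near 0
  have htend0 : Filter.Tendsto (Ffun r q) (nhdsWithin 0 (Set.Ioi 0)) (nhds (- Ccoef r q)) := by
    have tt : ∀ c : ℝ, 0 < c → Filter.Tendsto (fun g : ℝ => g ^ c)
        (nhdsWithin 0 (Set.Ioi 0)) (nhds 0) := by
      intro c hc
      have h := (Real.continuousAt_rpow_const 0 c (Or.inr hc.le)).tendsto
      rw [Real.zero_rpow hc.ne'] at h
      exact h.mono_left nhdsWithin_le_nhds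
    have H := (((((tt (2 - 2*r) (by linarith)).const_mul ((1 - q) / (1 - r))).sub
      ((tt (2 - r) (by linarith)).const_mul (2 * (3 - q) / (2 - r)))).add
      ((tt 2 (by norm_num)).const_mul 3)).sub
      ((tt (2 + r) (by linarith)).const_mul (2 / (2 + r)))).sub_const (Ccoef r q)
    simp only [mul_zero, sub_zero, add_zero, zero_sub] at H
    exact H
  have hev0 : ∀ᶠ g in nhdsWithin 0 (Set.Ioi 0),
      Ffun r q g < 0 ∧ g ∈ Set.Ioo (0:ℝ) a := by
    filter_upwards [htend0.eventually_lt_const (show -Ccoef r q < 0 by linarith),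
      Ioo_mem_nhdsGT ha_pos, self_mem_nhdsWithin] with g h1 h2 h3
    exact ⟨h1, h2⟩
  obtain ⟨ε, hFε, hε_mem⟩ := hev0.exists
  -- first zero by IVT on [ε, a]
  have hzero1 : ∃ g₀ : ℝ, 0 < g₀ ∧ g₀ < a ∧ Ffun r q g₀ = 0 := by
    have hcontIcc : ContinuousOn (Ffun r q) (Set.Icc ε a) := fun x hx =>
      (hcont x (lt_of_lt_of_le hε_mem.1 hx.1)).continuousWithinAt
    have h0mem : (0:ℝ) ∈ Set.Icc (Ffun r q ε) (Ffun r q a) := ⟨hFε.le, hFa.le⟩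
    obtain ⟨g₀, hg₀mem, hg₀⟩ := intermediate_value_Icc hε_mem.2.le hcontIcc h0mem
    refine ⟨g₀, lt_of_lt_of_le hε_mem.1 hg₀mem.1, ?_, hg₀⟩
    rcases lt_or_eq_of_le hg₀mem.2 with h | h
    · exact h
    · exfalso; rw [h] at hg₀; rw [hg₀] at hFa; exact lt_irrefl 0 hFa
  -- behaviour at infinity
  have htendtop : Filter.Tendsto (Ffun r q) Filter.atTop Filter.atBot := by
    have hkey : ∀ g : ℝ, 0 < g → Ffun r q g =
        g ^ (2 + r) * ((1 - q) / (1 - r) * g ^ (-(3*r)) - 2 * (3 - q) / (2 - r) * g ^ (-(2*r))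
          + 3 * g ^ (-r) - 2 / (2 + r)) + (- Ccoef r q) := by
      intro g hg
      have E1 : g ^ (2 + r) * g ^ (-(3*r)) = g ^ (2 - 2*r) := by
        rw [← Real.rpow_add hg]; ring_nf
      have E2 : g ^ (2 + r) * g ^ (-(2*r)) = g ^ (2 - r) := by
        rw [← Real.rpow_add hg]; ring_nf
      have E3 : g ^ (2 + r) * g ^ (-r) = g ^ ((2:ℝ)) := by
        rw [← Real.rpow_add hg]; ring_nf
      rw [Ffun]
      linear_combination (-(1 - q) / (1 - r)) * E1 + (2 * (3 - q) / (2 - r)) * E2 - 3 * E3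
    have hinner : Filter.Tendsto (fun g : ℝ =>
        (1 - q) / (1 - r) * g ^ (-(3*r)) - 2 * (3 - q) / (2 - r) * g ^ (-(2*r))
          + 3 * g ^ (-r) - 2 / (2 + r)) Filter.atTop (nhds (- (2 / (2 + r)))) := by
      have H := ((((tendsto_rpow_neg_atTop (by linarith : (0:ℝ) < 3*r)).const_mul
        ((1 - q) / (1 - r))).sub
        ((tendsto_rpow_neg_atTop (by linarith : (0:ℝ) < 2*r)).const_mul
        (2 * (3 - q) / (2 - r)))).add
        ((tendsto_rpow_neg_atTop hr0).const_mul 3)).sub_const (2 / (2 + r))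
      simpa using H
    have hmul : Filter.Tendsto (fun g : ℝ => g ^ (2 + r) *
        ((1 - q) / (1 - r) * g ^ (-(3*r)) - 2 * (3 - q) / (2 - r) * g ^ (-(2*r))
          + 3 * g ^ (-r) - 2 / (2 + r))) Filter.atTop Filter.atBot :=
      (tendsto_rpow_atTop (by linarith : (0:ℝ) < 2 + r)).atTop_mul_neg
        (neg_lt_zero.mpr (by positivity : (0:ℝ) < 2 / (2 + r))) hinner
    have hfin := Filter.tendsto_atBot_add_const_right Filter.atTop (- Ccoef r q) hmul
    apply hfin.congr'
    filter_upwards [Filter.eventually_gt_atTop (0:ℝ)] with g hg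
    exact (hkey g hg).symm
  have hevtop : ∀ᶠ g in Filter.atTop, Ffun r q g < 0 ∧ b < g := by
    filter_upwards [htendtop.eventually (Filter.eventually_lt_atBot (0:ℝ)),
      Filter.eventually_gt_atTop b] with g h1 h2
    exact ⟨h1, h2⟩
  obtain ⟨G, hFG, hbG⟩ := hevtop.exists
  -- third zero by IVT on [b, G]
  have hzero3 : ∃ g₁ : ℝ, b < g₁ ∧ Ffun r q g₁ = 0 := by
    have hcontIcc : ContinuousOn (Ffun r q) (Set.Icc b G) := fun x hx =>
      (hcont x (lt_of_lt_of_le hb_pos hx.1)).continuousWithinAt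
    have h0mem : (0:ℝ) ∈ Set.Icc (Ffun r q G) (Ffun r q b) := ⟨hFG.le, hFb.le⟩
    obtain ⟨g₁, hg₁mem, hg₁⟩ := intermediate_value_Icc' hbG.le hcontIcc h0mem
    refine ⟨g₁, ?_, hg₁⟩
    rcases lt_or_eq_of_le hg₁mem.1 with h | h
    · exact h
    · exfalso; rw [← h] at hg₁; rw [hg₁] at hFb; exact lt_irrefl 0 hFb
  obtain ⟨g₀, hg₀0, hg₀a, hg₀⟩ := hzero1
  obtain ⟨g₁, hg₁b, hg₁⟩ := hzero3
  exact ⟨⟨g₀, hg₀0, hg₀a, hg₀⟩, hF1, ⟨g₁, hg₁b, hg₁⟩⟩
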